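/- arXiv:2305.05637 — 2 statements merged into one kernel-verified Lean document; each statement's English description precedes it below -/
import Mathlib

section
/- Let A ⊆ 𝕋ⁿ be a tropical convex cone, i.e., a ⊕ b ∈ A (componentwise max) for all a, b ∈ A, and λ ⊙ a ∈ A (adding λ to every coordinate) for all a ∈ A and λ ∈ 𝕋. If the signed pair x = (x⁺,x⁻) belongs to the interior of the signed polar A° (taken in the space of signed pairs of (𝕋ⁿ)²), then ⟨x⁺,a⟩ > ⟨x⁻,a⟩ holds strictly for every a ∈ A with a ≠ (−∞,…,−∞). -/
/-- The tropical (max-plus) semiring 𝕋 = ℝ ∪ {−∞}, modeled as `WithBot ℝ`. -/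
abbrev Trop : Type := WithBot ℝ

/-- The map 𝕋 → ℝ, x ↦ eˣ (with e^{−∞} = 0), inducing the metric
d(x,y) = |eˣ − e^y| on 𝕋. -/
noncomputable def tropExp : Trop → ℝ := WithBot.recBotCoe (0 : ℝ) Real.exp

/-- The topology on 𝕋 induced by the metric d(x,y) = |eˣ − e^y|. -/
noncomputable instance : TopologicalSpace Trop :=
  TopologicalSpace.induced tropExp inferInstance

/-- A pair of vectors (x⁺, x⁻) ∈ (𝕋ⁿ)² is signed if, for every coordinate i,
x⁺_i = −∞ or x⁻_i = −∞. -/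
def SignedVecPair {n : ℕ} (x : (Fin n → Trop) × (Fin n → Trop)) : Prop :=
  ∀ i, x.1 i = ⊥ ∨ x.2 i = ⊥

/-- Tropical scalar product of vectors: ⟨x,y⟩ = max_i (x_i + y_i). -/
noncomputable def tdot {n : ℕ} (x y : Fin n → Trop) : Trop :=
  Finset.univ.sup fun i => x i + y i

/-- The "signed part" f^∨ of a pair of vectors f = (f⁺, f⁻):
f^{∨+}_i = f⁺_i if f⁺_i ≥ f⁻_i and −∞ otherwise;
f^{∨−}_i = f⁻_i if f⁻_i > f⁺_i and −∞ otherwise. -/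
noncomputable def vee {n : ℕ} (f : (Fin n → Trop) × (Fin n → Trop)) :
    (Fin n → Trop) × (Fin n → Trop) :=
  (fun i => if f.2 i ≤ f.1 i then f.1 i else ⊥,
   fun i => if f.1 i < f.2 i then f.2 i else ⊥)

/-- Tropical scalar action: (λ ⊙ f)_i = λ + f_i. -/
noncomputable def tsmul {n : ℕ} (l : Trop) (f : Fin n → Trop) : Fin n → Trop :=
  fun i => l + f i

/-- A monotone pre-congruence C ⊆ (𝕋ⁿ)²: stable by tropical scalar multiplication,
by componentwise max, by "transitivity" (f⁻ = g⁺ implies (f⁺,g⁻) ∈ C), and containing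
every pair (f⁺,f⁻) with f⁺ ≥ f⁻. -/
structure IsMonotonePrecongruence {n : ℕ} (C : Set ((Fin n → Trop) × (Fin n → Trop))) : Prop where
  smul_mem : ∀ f ∈ C, ∀ l : Trop, (tsmul l f.1, tsmul l f.2) ∈ C
  add_mem : ∀ f ∈ C, ∀ g ∈ C, (f.1 ⊔ g.1, f.2 ⊔ g.2) ∈ C
  trans_mem : ∀ f ∈ C, ∀ g ∈ C, f.2 = g.1 → (f.1, g.2) ∈ C
  monotone_mem : ∀ f : (Fin n → Trop) × (Fin n → Trop), f.2 ≤ f.1 → f ∈ C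

/-- The pair x ⊕_i y = (x⁺ ⊕ y⁺_{∖i}, x⁻_{∖i} ⊕ y⁻), where z_{∖i} is z with
coordinate i replaced by −∞. -/
noncomputable def oplusI {n : ℕ} (i : Fin n)
    (x y : (Fin n → Trop) × (Fin n → Trop)) : (Fin n → Trop) × (Fin n → Trop) :=
  (x.1 ⊔ Function.update y.1 i ⊥, Function.update x.2 i ⊥ ⊔ y.2)

/-- A signed bend cone R ⊆ (𝕋ⁿ)²: all elements are signed pairs, R contains all
pairs (x⁺, −∞), is stable by tropical scalar multiplication, and is stable under
the operations x, y ↦ (x ⊕ y)^∨ and x, y ↦ (x ⊕_i y)^∨ (the latter when x⁻_i = y⁺_i). -/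
structure IsSignedBendCone {n : ℕ} (R : Set ((Fin n → Trop) × (Fin n → Trop))) : Prop where
  signed : ∀ x ∈ R, SignedVecPair x
  pos_mem : ∀ xp : Fin n → Trop, (xp, fun _ => (⊥ : Trop)) ∈ R
  smul_mem : ∀ x ∈ R, ∀ l : Trop, (tsmul l x.1, tsmul l x.2) ∈ R
  add_vee_mem : ∀ x ∈ R, ∀ y ∈ R, vee (x.1 ⊔ y.1, x.2 ⊔ y.2) ∈ R
  addI_vee_mem : ∀ x ∈ R, ∀ y ∈ R, ∀ i : Fin n, x.2 i = y.1 i → vee (oplusI i x y) ∈ R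

/-- The one-sided polar B^⊲ = {a ∈ 𝕋ⁿ : ⟨x⁺,a⟩ ≥ ⟨x⁻,a⟩ for all (x⁺,x⁻) ∈ B}. -/
def onePolar {n : ℕ} (B : Set ((Fin n → Trop) × (Fin n → Trop))) : Set (Fin n → Trop) :=
  {a | ∀ x ∈ B, tdot x.2 a ≤ tdot x.1 a}

/-- The signed part C^∨ of a set C ⊆ (𝕋ⁿ)²: the signed pairs belonging to C. -/
def signedPart {n : ℕ} (C : Set ((Fin n → Trop) × (Fin n → Trop))) :
    Set ((Fin n → Trop) × (Fin n → Trop)) :=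
  {x ∈ C | SignedVecPair x}

/-- The signed polar A° of A ⊆ 𝕋ⁿ : the set of signed pairs (x⁺,x⁻) with
⟨x⁺,a⟩ ≥ ⟨x⁻,a⟩ for all a ∈ A. -/
def signedPolar {n : ℕ} (A : Set (Fin n → Trop)) :
    Set ((Fin n → Trop) × (Fin n → Trop)) :=
  {x | SignedVecPair x ∧ ∀ a ∈ A, tdot x.2 a ≤ tdot x.1 a}

/-- The signed polar of A ⊆ 𝕋ⁿ, viewed as a subset of the space of signed pairs
of (𝕋ⁿ)² (identified with (𝕊^∨)ⁿ with its subspace topology). -/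
def signedPolarSub {n : ℕ} (A : Set (Fin n → Trop)) :
    Set {x : (Fin n → Trop) × (Fin n → Trop) // SignedVecPair x} :=
  {x | ∀ a ∈ A, tdot x.val.2 a ≤ tdot x.val.1 a}


lemma tropExp_bot' : tropExp ⊥ = 0 := rfl
lemma tropExp_coe' (r : ℝ) : tropExp (↑r) = Real.exp r := rfl

lemma continuous_tropExp_comp {α : Type*} [TopologicalSpace α] {f : α → Trop}
    (h : Continuous (tropExp ∘ f)) : Continuous f :=
  continuous_induced_rng.mpr h

lemma continuous_coe_add (b : Trop) : Continuous (fun ε : ℝ => ((ε : ℝ) : Trop) + b) := by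
  apply continuous_tropExp_comp
  induction b using WithBot.recBotCoe with
  | bot =>
    have : (tropExp ∘ fun ε : ℝ => ((ε : ℝ) : Trop) + ⊥) = fun _ : ℝ => (0 : ℝ) := by
      funext ε; simp [WithBot.add_bot, tropExp_bot']
    rw [this]; exact continuous_const
  | coe r =>
    have : (tropExp ∘ fun ε : ℝ => ((ε : ℝ) : Trop) + (r : Trop)) =
        fun ε : ℝ => Real.exp (ε + r) := by
      funext ε; simp [← WithBot.coe_add, tropExp_coe']
    rw [this]; exact (Real.continuous_exp.comp (continuous_add_right r))

lemma exists_coe_mem_of_isOpen_bot {U : Set Trop} (hU : IsOpen U) (hb : ⊥ ∈ U) :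
    ∃ r : ℝ, (↑r : Trop) ∈ U := by
  obtain ⟨V, hV, rfl⟩ := isOpen_induced_iff.mp hU
  obtain ⟨δ, hδ, hball⟩ := Metric.isOpen_iff.mp hV 0 hb
  refine ⟨Real.log (δ / 2), hball ?_⟩
  simp only [Metric.mem_ball, Real.dist_eq, Set.mem_preimage, tropExp_coe',
    Real.exp_log (by positivity : (0:ℝ) < δ / 2), sub_zero]
  rw [abs_of_pos (by positivity)]; linarith

/-- If A is a tropical convex cone and the signed pair x lies in the interior of the
signed polar A°, then ⟨x⁺,a⟩ > ⟨x⁻,a⟩ strictly for all nonzero a ∈ A. -/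
theorem interior_signedPolar_strict {n : ℕ} (A : Set (Fin n → Trop))
    (hadd : ∀ a ∈ A, ∀ b ∈ A, a ⊔ b ∈ A)
    (hsmul : ∀ a ∈ A, ∀ l : Trop, (fun i => l + a i) ∈ A)
    (x : {x : (Fin n → Trop) × (Fin n → Trop) // SignedVecPair x})
    (hx : x ∈ interior (signedPolarSub A)) :
    ∀ a ∈ A, a ≠ (fun _ => (⊥ : Trop)) → tdot x.val.2 a < tdot x.val.1 a := by
  have hmem : x ∈ signedPolarSub A := interior_subset hx
  intro a ha hane
  by_contra hlt
  push_neg at hlt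
  have heq : tdot x.val.2 a = tdot x.val.1 a := le_antisymm (hmem a ha) hlt
  obtain ⟨i, hai⟩ : ∃ i, a i ≠ ⊥ := by
    by_contra h
    push_neg at h
    exact hane (funext h)
  by_cases hbot : tdot x.val.1 a = ⊥
  · -- Case 2: both dots are ⊥
    have h2bot : tdot x.val.2 a = ⊥ := heq.trans hbot
    have hall1 : ∀ j, x.val.1 j + a j = ⊥ := fun j =>
      le_bot_iff.mp (le_of_le_of_eq
        (Finset.le_sup (f := fun j => x.val.1 j + a j) (Finset.mem_univ j)) hbot)
    have hall2 : ∀ j, x.val.2 j + a j = ⊥ := fun j =>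
      le_bot_iff.mp (le_of_le_of_eq
        (Finset.le_sup (f := fun j => x.val.2 j + a j) (Finset.mem_univ j)) h2bot)
    have hx1i : x.val.1 i = ⊥ := by
      rcases WithBot.add_eq_bot.mp (hall1 i) with h | h
      · exact h
      · exact absurd h hai
    have hx2i : x.val.2 i = ⊥ := by
      rcases WithBot.add_eq_bot.mp (hall2 i) with h | h
      · exact h
      · exact absurd h hai
    -- perturbation map
    set g : Trop → (Fin n → Trop) := fun c j => if j = i then c else x.val.2 j with hg
    have hsigned : ∀ c : Trop, SignedVecPair (x.val.1, g c) := by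
      intro c j
      by_cases hj : j = i
      · subst hj; left; exact hx1i
      · simp only [hg, hj, if_false]; exact x.prop j
    set φ : Trop → {x : (Fin n → Trop) × (Fin n → Trop) // SignedVecPair x} :=
      fun c => ⟨(x.val.1, g c), hsigned c⟩ with hφ
    have hφcont : Continuous φ := by
      apply Continuous.subtype_mk
      apply Continuous.prodMk continuous_const
      apply continuous_pi
      intro j
      by_cases hj : j = i
      · simp only [hg, hj, if_true]; exact continuous_id
      · simp only [hg, hj, if_false]; exact continuous_const
    have hφbot : φ ⊥ = x := by
      apply Subtype.ext
      have : g ⊥ = x.val.2 := by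
        funext j
        by_cases hj : j = i
        · subst hj; simp [hg, hx2i]
        · simp [hg, hj]
      simp [hφ, this]
    have hUopen : IsOpen (φ ⁻¹' interior (signedPolarSub A)) :=
      isOpen_interior.preimage hφcont
    have hUbot : ⊥ ∈ φ ⁻¹' interior (signedPolarSub A) := by
      simp [Set.mem_preimage, hφbot, hx]
    obtain ⟨r, hr⟩ := exists_coe_mem_of_isOpen_bot hUopen hUbot
    have hrmem : φ ↑r ∈ signedPolarSub A := interior_subset hr
    have hle : tdot (g ↑r) a ≤ tdot x.val.1 a := hrmem a ha
    have hlow : (↑r : Trop) + a i ≤ tdot (g ↑r) a := by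
      have := Finset.le_sup (f := fun j => g ↑r j + a j) (Finset.mem_univ i)
      simpa [hg, tdot] using this
    rw [hbot] at hle
    have : (↑r : Trop) + a i = ⊥ := le_bot_iff.mp (hlow.trans hle)
    rcases WithBot.add_eq_bot.mp this with h | h
    · exact WithBot.coe_ne_bot h
    · exact hai h
  · -- Case 1: common value is finite
    obtain ⟨t, ht⟩ := WithBot.ne_bot_iff_exists.mp hbot
    -- sup attained
    have hne : (Finset.univ : Finset (Fin n)).Nonempty := ⟨i, Finset.mem_univ i⟩
    obtain ⟨k, _, hk⟩ := Finset.exists_mem_eq_sup Finset.univ hne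
      (fun j => x.val.2 j + a j)
    -- hk : tdot x.val.2 a = x.val.2 k + a k
    have hsigned : ∀ ε : ℝ, SignedVecPair (x.val.1, fun j => ((ε : ℝ) : Trop) + x.val.2 j) := by
      intro ε j
      rcases x.prop j with h | h
      · left; exact h
      · right
        show ((ε : ℝ) : Trop) + x.val.2 j = ⊥
        rw [h, WithBot.add_bot]
    set ψ : ℝ → {x : (Fin n → Trop) × (Fin n → Trop) // SignedVecPair x} :=
      fun ε => ⟨(x.val.1, fun j => ((ε : ℝ) : Trop) + x.val.2 j), hsigned ε⟩ with hψ
    have hψcont : Continuous ψ := by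
      apply Continuous.subtype_mk
      exact Continuous.prodMk continuous_const
        (continuous_pi fun j => continuous_coe_add (x.val.2 j))
    have hψ0 : ψ 0 = x := by
      apply Subtype.ext
      have : (fun j => (((0:ℝ) : ℝ) : Trop) + x.val.2 j) = x.val.2 := by
        funext j; simp
      simp [hψ, this]
    have hUopen : IsOpen (ψ ⁻¹' interior (signedPolarSub A)) :=
      isOpen_interior.preimage hψcont
    have hU0 : (0:ℝ) ∈ ψ ⁻¹' interior (signedPolarSub A) := by
      simp [Set.mem_preimage, hψ0, hx]
    obtain ⟨δ, hδ, hball⟩ := Metric.isOpen_iff.mp hUopen 0 hU0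
    have hεmem : ψ (δ/2) ∈ signedPolarSub A := by
      apply interior_subset
      apply hball
      rw [Metric.mem_ball, Real.dist_eq, sub_zero, abs_of_pos (by positivity : (0:ℝ) < δ/2)]
      linarith
    have hle : tdot (fun j => (((δ/2 : ℝ)) : Trop) + x.val.2 j) a ≤ tdot x.val.1 a :=
      hεmem a ha
    have hlow : (((δ/2 : ℝ)) : Trop) + (x.val.2 k + a k) ≤
        tdot (fun j => (((δ/2 : ℝ)) : Trop) + x.val.2 j) a := by
      have := Finset.le_sup (f := fun j => ((((δ/2 : ℝ)) : Trop) + x.val.2 j) + a j)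
        (Finset.mem_univ k)
      simpa [add_assoc, tdot] using this
    rw [← hk] at hlow
    have hfinal : (((δ/2 : ℝ)) : Trop) + tdot x.val.2 a ≤ tdot x.val.1 a :=
      hlow.trans hle
    rw [heq, ← ht] at hfinal
    rw [← WithBot.coe_add, WithBot.coe_le_coe] at hfinal
    linarith
end

section
/- Let A be an n×n symmetric matrix of signed pairs (A_ij = A_ji for all i, j). Then A is tropical copositive, i.e., xᵀAx ⪰ 𝟘 holds for every vector x whose entries are nonnegative signed pairs of the form (x_i, −∞) with x_i ∈ 𝕋, if and only if A_ii ⪰ 𝟘 for all i and (A_ij⁻, −∞) ⊙ (A_ij⁻, −∞) ⪯ A_ii ⊙ A_jj for all i, j, where A_ij⁻ denotes the second (negative) component of the pair A_ij. (Characterization of the tropical copositive cone, the signed polar of the tropical completely positive cone.) -/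
/-- A pair (a⁺, a⁻) ∈ 𝕋² is signed if a⁺ = −∞ or a⁻ = −∞. -/
def SignedPair (a : Trop × Trop) : Prop := a.1 = ⊥ ∨ a.2 = ⊥

/-- The order relation ⪯ on pairs: (a⁺,a⁻) ⪯ (b⁺,b⁻) iff max(a⁺,b⁻) ≤ max(a⁻,b⁺). -/
def ple (a b : Trop × Trop) : Prop := max a.1 b.2 ≤ max a.2 b.1

/-- The strict relation ≺ on pairs: (a⁺,a⁻) ≺ (b⁺,b⁻) iff max(a⁺,b⁻) < max(a⁻,b⁺). -/
def plt (a b : Trop × Trop) : Prop := max a.1 b.2 < max a.2 b.1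

/-- Addition ⊕ of pairs in the symmetrized tropical semiring: componentwise max. -/
noncomputable def padd (a b : Trop × Trop) : Trop × Trop := (max a.1 b.1, max a.2 b.2)

/-- Multiplication ⊙ of pairs in the symmetrized tropical semiring. -/
noncomputable def pmul (a b : Trop × Trop) : Trop × Trop :=
  (max (a.1 + b.1) (a.2 + b.2), max (a.1 + b.2) (a.2 + b.1))

/-- The zero pair 𝟘 = (−∞, −∞). -/
def pzero : Trop × Trop := (⊥, ⊥)

/-- The quadratic form xᵀAx = ⊕_{i,j} x_i ⊙ A_{ij} ⊙ x_j, computed with the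
pair operations: its two components are the maxima of the corresponding
components of the terms x_i ⊙ A_{ij} ⊙ x_j. -/
noncomputable def quadForm {n : ℕ} (A : Fin n → Fin n → Trop × Trop)
    (x : Fin n → Trop × Trop) : Trop × Trop :=
  (Finset.univ.sup fun p : Fin n × Fin n => (pmul (pmul (x p.1) (A p.1 p.2)) (x p.2)).1,
   Finset.univ.sup fun p : Fin n × Fin n => (pmul (pmul (x p.1) (A p.1 p.2)) (x p.2)).2)

set_option linter.unnecessarySimpa false

lemma trop_half_le {a b : Trop} (h : a + a ≤ b + b) : a ≤ b := by
  induction a using WithBot.recBotCoe with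
  | bot => exact bot_le
  | coe r =>
    induction b using WithBot.recBotCoe with
    | bot => simp [← WithBot.coe_add] at h
    | coe s =>
      rw [← WithBot.coe_add, ← WithBot.coe_add, WithBot.coe_le_coe] at h
      exact WithBot.coe_le_coe.mpr (by linarith)

lemma pmul_pair (t s : Trop) (a : Trop × Trop) :
    pmul (pmul (t, (⊥ : Trop)) a) (s, (⊥ : Trop)) = (t + a.1 + s, t + a.2 + s) := by
  simp [pmul, WithBot.add_bot, WithBot.bot_add]

lemma quadForm_eval {n : ℕ} (A : Fin n → Fin n → Trop × Trop) (x : Fin n → Trop) :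
    quadForm A (fun i => (x i, ⊥)) =
      (Finset.univ.sup fun p : Fin n × Fin n => x p.1 + (A p.1 p.2).1 + x p.2,
       Finset.univ.sup fun p : Fin n × Fin n => x p.1 + (A p.1 p.2).2 + x p.2) := by
  unfold quadForm
  refine Prod.ext ?_ ?_ <;> (apply Finset.sup_congr rfl; intro p _; rw [pmul_pair])

lemma ple_pzero_iff (a : Trop × Trop) : ple pzero a ↔ a.2 ≤ a.1 := by
  simp [ple, pzero]

/-- Characterization of the tropical copositive cone (the signed polar of the
tropical completely positive cone): a symmetric matrix A of signed pairs satisfies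
xᵀAx ⪰ 𝟘 for all vectors x with nonnegative entries (x_i, −∞) iff A_ii ⪰ 𝟘 for all
i and (A_ij⁻)² ⪯ A_ii ⊙ A_jj for all i, j. -/
theorem tropical_copositive_characterization {n : ℕ} (A : Fin n → Fin n → Trop × Trop)
    (hsigned : ∀ i j, SignedPair (A i j)) (hsym : ∀ i j, A i j = A j i) :
    (∀ x : Fin n → Trop, ple pzero (quadForm A fun i => (x i, ⊥))) ↔
      ((∀ i, ple pzero (A i i)) ∧
        ∀ i j, ple (pmul ((A i j).2, ⊥) ((A i j).2, ⊥)) (pmul (A i i) (A j j))) := by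
  constructor
  · intro h
    -- first: diagonal
    have hdiag : ∀ i, (A i i).2 = ⊥ := by
      intro i
      have hx := h (fun k => if k = i then (0 : Trop) else ⊥)
      rw [quadForm_eval, ple_pzero_iff] at hx
      have h1 : (A i i).2 ≤ (Finset.univ.sup fun p : Fin n × Fin n =>
          (if p.1 = i then (0:Trop) else ⊥) + (A p.1 p.2).2 + (if p.2 = i then (0:Trop) else ⊥)) := by
        have := Finset.le_sup (f := fun p : Fin n × Fin n =>
          (if p.1 = i then (0:Trop) else ⊥) + (A p.1 p.2).2 + (if p.2 = i then (0:Trop) else ⊥))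
          (Finset.mem_univ (i, i))
        simpa using this
      have h2 : (Finset.univ.sup fun p : Fin n × Fin n =>
          (if p.1 = i then (0:Trop) else ⊥) + (A p.1 p.2).1 + (if p.2 = i then (0:Trop) else ⊥)) ≤ (A i i).1 := by
        apply Finset.sup_le
        intro p _
        by_cases h1 : p.1 = i
        · by_cases h2 : p.2 = i
          · simp [h1, h2]
          · simp [h1, h2, WithBot.add_bot]
        · simp [h1, WithBot.bot_add]
      have hle : (A i i).2 ≤ (A i i).1 := le_trans h1 (le_trans hx h2)
      rcases hsigned i i with hb | hb
      · rw [hb] at hle; exact le_bot_iff.mp hle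
      · exact hb
    have hdle : ∀ i, ple pzero (A i i) := by
      intro i; rw [ple_pzero_iff, hdiag i]; exact bot_le
    refine ⟨hdle, ?_⟩
    intro i j
    -- reduce goal to (A i j).2 + (A i j).2 ≤ (A i i).1 + (A j j).1
    have hgoal : (A i j).2 + (A i j).2 ≤ (A i i).1 + (A j j).1 := by
      rcases eq_or_ne ((A i j).2) ⊥ with hb | hb
      · rw [hb]; simp
      · obtain ⟨γ, hγ⟩ := WithBot.ne_bot_iff_exists.mp hb
        have hij1 : (A i j).1 = ⊥ := by
          rcases hsigned i j with h1 | h2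
          · exact h1
          · exact absurd h2 hb
        have hji1 : (A j i).1 = ⊥ := by rw [← hsym i j]; exact hij1
        have hne : i ≠ j := by
          intro e
          rw [e, hdiag j] at hb
          exact hb rfl
        have key : ∀ t s : ℝ, ((t : Trop) + (A i j).2 + (s : Trop)) ≤
            max ((t : Trop) + (A i i).1 + (t : Trop)) ((s : Trop) + (A j j).1 + (s : Trop)) := by
          intro t s
          have hx := h (fun k => if k = i then (t : Trop) else if k = j then (s : Trop) else ⊥)
          rw [quadForm_eval, ple_pzero_iff] at hx
          refine le_trans (le_trans ?_ hx) ?_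
          · have := Finset.le_sup (f := fun p : Fin n × Fin n =>
              (if p.1 = i then (t:Trop) else if p.1 = j then (s:Trop) else ⊥) + (A p.1 p.2).2 +
              (if p.2 = i then (t:Trop) else if p.2 = j then (s:Trop) else ⊥))
              (Finset.mem_univ (i, j))
            simpa [Ne.symm hne] using this
          · apply Finset.sup_le
            rintro ⟨a, b⟩ -
            simp only
            by_cases ha : a = i
            · subst ha
              by_cases hb2 : b = a
              · subst hb2; simpa using le_max_left _ _
              · by_cases hb3 : b = j
                · subst hb3; simp [hij1, Ne.symm hne, WithBot.add_bot, WithBot.bot_add]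
                · simp [hb2, hb3, WithBot.add_bot]
            · by_cases ha2 : a = j
              · subst ha2
                by_cases hb2 : b = i
                · subst hb2; simp [hji1, ha, Ne.symm hne, WithBot.add_bot, WithBot.bot_add]
                · by_cases hb3 : b = a
                  · subst hb3; simpa [ha] using le_max_right _ _
                  · simp [ha, hb2, hb3, WithBot.add_bot]
              · simp [ha, ha2, WithBot.bot_add]
        have hp : ∃ α : ℝ, (A i i).1 = ↑α := by
          rcases eq_or_ne ((A i i).1) ⊥ with hbot | hne2
          · exfalso
            rcases eq_or_ne ((A j j).1) ⊥ with hbot2 | hne3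
            · have := key 0 0
              rw [hbot, hbot2, ← hγ] at this
              simp [WithBot.add_bot, WithBot.bot_add] at this
            · obtain ⟨β, hβ⟩ := WithBot.ne_bot_iff_exists.mp hne3
              have := key (β - γ + 1) 0
              rw [hbot, ← hγ, ← hβ] at this
              simp only [WithBot.add_bot, WithBot.bot_add, bot_sup_eq, sup_bot_eq,
                max_bot_left, max_bot_right] at this
              norm_cast at this
              linarith
          · exact (WithBot.ne_bot_iff_exists.mp hne2).imp fun a ha => ha.symm
        have hq : ∃ β : ℝ, (A j j).1 = ↑β := by
          rcases eq_or_ne ((A j j).1) ⊥ with hbot | hne2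
          · exfalso
            obtain ⟨α, hα⟩ := hp
            have := key 0 (α - γ + 1)
            rw [hbot, ← hγ, hα] at this
            simp only [WithBot.add_bot, WithBot.bot_add, bot_sup_eq, sup_bot_eq,
              max_bot_left, max_bot_right] at this
            norm_cast at this
            linarith
          · exact (WithBot.ne_bot_iff_exists.mp hne2).imp fun a ha => ha.symm
        obtain ⟨α, hα⟩ := hp
        obtain ⟨β, hβ⟩ := hq
        have := key ((β - α) / 2) 0
        rw [← hγ, hα, hβ] at this
        rw [show ((((β - α)/2 : ℝ) : Trop) + (α:Trop) + (((β - α)/2:ℝ):Trop)) = ((β : ℝ) : Trop) by norm_cast; ring_nf,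
          show (((0:ℝ):Trop) + (β:Trop) + ((0:ℝ):Trop)) = ((β : ℝ) : Trop) by norm_cast; ring] at this
        rw [max_self] at this
        norm_cast at this
        rw [← hγ, hα, hβ]
        norm_cast
        linarith
    simpa [ple, pmul, hdiag i, hdiag j, WithBot.add_bot, WithBot.bot_add] using hgoal
  · rintro ⟨hd, ho⟩ x
    rw [quadForm_eval, ple_pzero_iff]
    apply Finset.sup_le
    rintro ⟨i, j⟩ -
    simp only
    -- extract diag bot
    have hdiag : ∀ k, (A k k).2 = ⊥ := by
      intro k
      have := (ple_pzero_iff (A k k)).mp (hd k)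
      rcases hsigned k k with hb | hb
      · rw [hb] at this; exact le_bot_iff.mp this
      · exact hb
    have hkey : (A i j).2 + (A i j).2 ≤ (A i i).1 + (A j j).1 := by
      have := ho i j
      simp [ple, pmul, hdiag i, hdiag j, WithBot.add_bot, WithBot.bot_add] at this
      exact this
    apply trop_half_le
    have h1 : x i + (A i i).1 + x i ≤ Finset.univ.sup fun p : Fin n × Fin n =>
        x p.1 + (A p.1 p.2).1 + x p.2 :=
      Finset.le_sup (f := fun p : Fin n × Fin n => x p.1 + (A p.1 p.2).1 + x p.2)
        (Finset.mem_univ (i, i))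
    have h2 : x j + (A j j).1 + x j ≤ Finset.univ.sup fun p : Fin n × Fin n =>
        x p.1 + (A p.1 p.2).1 + x p.2 :=
      Finset.le_sup (f := fun p : Fin n × Fin n => x p.1 + (A p.1 p.2).1 + x p.2)
        (Finset.mem_univ (j, j))
    calc (x i + (A i j).2 + x j) + (x i + (A i j).2 + x j)
        = (x i + x i) + ((A i j).2 + (A i j).2) + (x j + x j) := by abel
      _ ≤ (x i + x i) + ((A i i).1 + (A j j).1) + (x j + x j) :=
          add_le_add (add_le_add le_rfl hkey) le_rfl
      _ = (x i + (A i i).1 + x i) + (x j + (A j j).1 + x j) := by abel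
      _ ≤ _ := add_le_add h1 h2
end
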